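/- arXiv:0903.4965 — 2 statements merged into one kernel-verified Lean document; each statement's English description precedes it below -/
import Mathlib

section
/- Fix r ≥ 1 and define f_r(n) = E(n, n, …, n) (r copies of n) for positive integers n. Then f_r is a multiplicative arithmetic function (f_r(1) = 1 and f_r(n₁n₂) = f_r(n₁)·f_r(n₂) for coprime n₁, n₂), and for every prime p and every a ≥ 1, f_r(p^a) = (p−1)·p^{(r−1)(a−1)}·h_r(p), where h_r(x) = ((x−1)^{r−1} + (−1)^r)/x. -/
/-- The von Sterneck function `Φ(k,n) = μ(n/gcd(k,n)) * φ(n) / φ(n/gcd(k,n))`. -/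
noncomputable def vonSterneck (k n : ℕ) : ℚ :=
  (ArithmeticFunction.moebius (n / Nat.gcd k n) : ℚ) * (Nat.totient n : ℚ) /
    (Nat.totient (n / Nat.gcd k n) : ℚ)

/-- The orbicyclic function `E(m_1,…,m_r)`. -/
noncomputable def orbE {r : ℕ} (m : Fin r → ℕ) : ℚ :=
  (∑ k ∈ Finset.Icc 1 (Finset.univ.lcm m), ∏ j, vonSterneck k (m j)) /
    ((Finset.univ.lcm m : ℕ) : ℚ)

/-- The polynomial `h_s(x) = ((x-1)^(s-1) + (-1)^s)/x`. -/
noncomputable def hpoly (s : ℕ) (x : ℚ) : ℚ := ((x - 1) ^ (s - 1) + (-1) ^ s) / x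

lemma lcm_const {r : ℕ} (hr : 1 ≤ r) (n : ℕ) :
    Finset.univ.lcm (fun _ : Fin r => n) = n :=
  Nat.dvd_antisymm (Finset.lcm_dvd fun _ _ => dvd_rfl)
    (Finset.dvd_lcm (Finset.mem_univ (⟨0, hr⟩ : Fin r)))

lemma vs_mod (k n : ℕ) : vonSterneck (k % n) n = vonSterneck k n := by
  unfold vonSterneck
  rw [← Nat.gcd_rec n k, Nat.gcd_comm n k]

lemma vs_mul {n₁ n₂ : ℕ} (k : ℕ) (h1 : 0 < n₁) (h2 : 0 < n₂) (h : Nat.Coprime n₁ n₂) :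
    vonSterneck k (n₁ * n₂) = vonSterneck k n₁ * vonSterneck k n₂ := by
  unfold vonSterneck
  have hd1 : Nat.gcd k n₁ ∣ n₁ := Nat.gcd_dvd_right k n₁
  have hd2 : Nat.gcd k n₂ ∣ n₂ := Nat.gcd_dvd_right k n₂
  have hg : Nat.gcd k (n₁ * n₂) = Nat.gcd k n₁ * Nat.gcd k n₂ := h.gcd_mul k
  have hdiv : n₁ * n₂ / (Nat.gcd k n₁ * Nat.gcd k n₂)
      = (n₁ / Nat.gcd k n₁) * (n₂ / Nat.gcd k n₂) := (Nat.div_mul_div_comm hd1 hd2).symm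
  have hcop : Nat.Coprime (n₁ / Nat.gcd k n₁) (n₂ / Nat.gcd k n₂) :=
    Nat.Coprime.coprime_dvd_left (Nat.div_dvd_of_dvd hd1)
      (Nat.Coprime.coprime_dvd_right (Nat.div_dvd_of_dvd hd2) h)
  have ht1 : (Nat.totient (n₁ / Nat.gcd k n₁) : ℚ) ≠ 0 := by
    have := Nat.totient_pos.mpr (Nat.div_pos (Nat.le_of_dvd h1 hd1) (Nat.gcd_pos_of_pos_right k h1))
    exact_mod_cast this.ne'
  have ht2 : (Nat.totient (n₂ / Nat.gcd k n₂) : ℚ) ≠ 0 := by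
    have := Nat.totient_pos.mpr (Nat.div_pos (Nat.le_of_dvd h2 hd2) (Nat.gcd_pos_of_pos_right k h2))
    exact_mod_cast this.ne'
  rw [hg, hdiv, Nat.totient_mul hcop, Nat.totient_mul h,
    ArithmeticFunction.isMultiplicative_moebius.map_mul_of_coprime hcop]
  push_cast
  field_simp

lemma sum_Icc_one (n : ℕ) [NeZero n] (F : ℕ → ℚ) (hF : ∀ k, F (k % n) = F k) :
    ∑ k ∈ Finset.Icc 1 n, F k = ∑ x : ZMod n, F x.val := by
  have hn : 0 < n := Nat.pos_of_ne_zero (NeZero.ne n)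
  have h0 : F n = F 0 := by rw [← hF n, Nat.mod_self]
  have h1 : ∑ k ∈ Finset.Icc 1 n, F k = ∑ k ∈ Finset.range n, F k := by
    rw [Finset.range_eq_Ico, ← Finset.Ico_insert_right (by omega : (1:ℕ) ≤ n),
      ← Finset.insert_Ico_add_one_left_eq_Ico hn, Finset.sum_insert (by simp),
      Finset.sum_insert (by simp)]
    simp only [Nat.succ_eq_add_one, zero_add, h0]
  rw [h1]
  exact (Finset.sum_nbij' (fun x : ZMod n => x.val) (fun k => (k : ZMod n))
    (fun x _ => Finset.mem_range.mpr (ZMod.val_lt x))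
    (fun k _ => Finset.mem_univ _)
    (fun x _ => ZMod.natCast_rightInverse x)
    (fun k hk => ZMod.val_cast_of_lt (Finset.mem_range.mp hk))
    (fun x _ => rfl)).symm

lemma sum_zmod_mul {m n : ℕ} [NeZero m] [NeZero n] (h : Nat.Coprime m n) (F G : ℕ → ℚ)
    (hF : ∀ k, F (k % m) = F k) (hG : ∀ k, G (k % n) = G k) :
    haveI : NeZero (m * n) := ⟨Nat.mul_ne_zero (NeZero.ne m) (NeZero.ne n)⟩
    ∑ x : ZMod (m * n), F x.val * G x.val
      = (∑ y : ZMod m, F y.val) * (∑ z : ZMod n, G z.val) := by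
  haveI : NeZero (m * n) := ⟨Nat.mul_ne_zero (NeZero.ne m) (NeZero.ne n)⟩
  rw [Finset.sum_mul_sum]
  have hpt : (∑ p : ZMod m × ZMod n, F p.1.val * G p.2.val)
      = ∑ i : ZMod m, ∑ j : ZMod n, F i.val * G j.val :=
    Fintype.sum_prod_type (fun p : ZMod m × ZMod n => F p.1.val * G p.2.val)
  rw [← hpt]
  apply Fintype.sum_equiv (ZMod.chineseRemainder h).toEquiv
  intro x
  have hx : (ZMod.chineseRemainder h).toEquiv x
      = (((x.val : ℕ) : ZMod m), ((x.val : ℕ) : ZMod n)) := by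
    conv_lhs => rw [show x = ((x.val : ℕ) : ZMod (m * n)) from (ZMod.natCast_rightInverse x).symm]
    show (ZMod.chineseRemainder h) ((x.val : ℕ) : ZMod (m * n)) = _
    rw [map_natCast]
    rfl
  rw [hx]
  simp only [ZMod.val_natCast]
  rw [hF, hG]

lemma vs_zero {p a k : ℕ} (hp : p.Prime) (ha : 1 ≤ a) (hk : ¬ p ^ (a - 1) ∣ k) :
    vonSterneck k (p ^ a) = 0 := by
  obtain ⟨c, hc, hgcd⟩ := (Nat.dvd_prime_pow hp).mp (Nat.gcd_dvd_right k (p ^ a))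
  have hc2 : c < a - 1 := by
    by_contra hlt
    push_neg at hlt
    exact hk ((pow_dvd_pow p hlt).trans (hgcd ▸ Nat.gcd_dvd_left k (p ^ a)))
  have hdiv : p ^ a / Nat.gcd k (p ^ a) = p ^ (a - c) := by
    rw [hgcd, Nat.pow_div hc hp.pos]
  unfold vonSterneck
  rw [hdiv, ArithmeticFunction.moebius_apply_prime_pow hp (by omega), if_neg (by omega)]
  simp

lemma vs_cop {p a j : ℕ} (hp : p.Prime) (ha : 1 ≤ a) (hj1 : 1 ≤ j) (hjp : j < p) :
    vonSterneck (p ^ (a - 1) * j) (p ^ a) = -((p : ℚ) ^ (a - 1)) := by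
  have hcop : Nat.gcd j p = 1 := by
    have : ¬ p ∣ j := fun hd => absurd (Nat.le_of_dvd (by omega) hd) (by omega)
    exact Nat.coprime_comm.mp ((Nat.Prime.coprime_iff_not_dvd hp).mpr this)
  have hgcd : Nat.gcd (p ^ (a - 1) * j) (p ^ a) = p ^ (a - 1) := by
    have : p ^ a = p ^ (a - 1) * p := by
      rw [← pow_succ]; congr 1; omega
    rw [this, Nat.gcd_mul_left, hcop, mul_one]
  have hdivv : p ^ a / p ^ (a - 1) = p := by
    rw [Nat.pow_div (by omega) hp.pos, show a - (a - 1) = 1 by omega, pow_one]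
  have hpm1 : ((p - 1 : ℕ) : ℚ) ≠ 0 := by
    have := hp.two_le; intro hq
    rw [Nat.cast_eq_zero] at hq; omega
  unfold vonSterneck
  rw [hgcd, hdivv, ArithmeticFunction.moebius_apply_prime hp,
    Nat.totient_prime hp, Nat.totient_prime_pow hp (by omega)]
  push_cast [Nat.cast_sub hp.one_le]
  push_cast [Nat.cast_sub hp.one_le] at hpm1
  field_simp

lemma vs_self {p a : ℕ} (hp : p.Prime) (ha : 1 ≤ a) :
    vonSterneck (p ^ (a - 1) * p) (p ^ a) = (p : ℚ) ^ (a - 1) * ((p : ℚ) - 1) := by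
  have hpa : p ^ (a - 1) * p = p ^ a := by rw [← pow_succ]; congr 1; omega
  unfold vonSterneck
  rw [hpa, Nat.gcd_self, Nat.div_self (pow_pos hp.pos a), ArithmeticFunction.moebius_apply_one,
    Nat.totient_one, Nat.totient_prime_pow hp (by omega)]
  push_cast [Nat.cast_sub hp.one_le]
  ring

lemma sum_prime_pow (r : ℕ) (hr : 1 ≤ r) {p a : ℕ} (hp : p.Prime) (ha : 1 ≤ a) :
    ∑ k ∈ Finset.Icc 1 (p ^ a), (vonSterneck k (p ^ a)) ^ r
      = ((p : ℚ) - 1) * (-((p : ℚ) ^ (a - 1))) ^ r + ((p : ℚ) ^ (a - 1) * ((p : ℚ) - 1)) ^ r := by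
  have hppos : 0 < p := hp.pos
  have hq : 0 < p ^ (a - 1) := pow_pos hppos _
  rw [← Finset.sum_filter_of_ne (p := fun k => p ^ (a - 1) ∣ k)
    (fun x _ hx => by
      by_contra hdvd
      exact hx (by rw [vs_zero hp ha hdvd, zero_pow (by omega)]))]
  have himg : (Finset.Icc 1 (p ^ a)).filter (fun k => p ^ (a - 1) ∣ k)
      = (Finset.Icc 1 p).image (fun j => p ^ (a - 1) * j) := by
    ext k
    simp only [Finset.mem_filter, Finset.mem_Icc, Finset.mem_image]
    constructor
    · rintro ⟨⟨hk1, hk2⟩, j, rfl⟩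
      refine ⟨j, ⟨by by_contra hj; push_neg at hj; interval_cases j <;> omega, ?_⟩, rfl⟩
      have : p ^ a = p ^ (a - 1) * p := by rw [← pow_succ]; congr 1; omega
      rw [this] at hk2
      exact Nat.le_of_mul_le_mul_left hk2 hq
    · rintro ⟨j, ⟨hj1, hj2⟩, rfl⟩
      refine ⟨⟨Nat.mul_pos hq (by omega), ?_⟩, Dvd.intro j rfl⟩
      calc p ^ (a - 1) * j ≤ p ^ (a - 1) * p := by exact Nat.mul_le_mul_left _ hj2
        _ = p ^ a := by rw [← pow_succ]; congr 1; omega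
  rw [himg, Finset.sum_image (fun x _ y _ hxy => Nat.eq_of_mul_eq_mul_left hq hxy)]
  rw [← Finset.Ico_insert_right hp.one_le, Finset.sum_insert (by simp),
    vs_self hp ha, Finset.sum_congr rfl
      (fun j hj => by
        rw [vs_cop hp ha (Finset.mem_Ico.mp hj).1 (Finset.mem_Ico.mp hj).2]),
    Finset.sum_const, Nat.card_Ico, nsmul_eq_mul]
  push_cast [Nat.cast_sub hp.one_le]
  ring

lemma orbE_const {r : ℕ} (hr : 1 ≤ r) (n : ℕ) :
    orbE (fun _ : Fin r => n) = (∑ k ∈ Finset.Icc 1 n, (vonSterneck k n) ^ r) / (n : ℚ) := by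
  unfold orbE
  rw [lcm_const hr]
  congr 1
  refine Finset.sum_congr rfl fun k _ => ?_
  rw [Finset.prod_const, Finset.card_univ, Fintype.card_fin]

theorem orbE_diagonal_multiplicative (r : ℕ) (hr : 1 ≤ r) :
    (orbE (fun _ : Fin r => 1) = 1) ∧
    (∀ n₁ n₂ : ℕ, 0 < n₁ → 0 < n₂ → Nat.Coprime n₁ n₂ →
      orbE (fun _ : Fin r => n₁ * n₂) =
        orbE (fun _ : Fin r => n₁) * orbE (fun _ : Fin r => n₂)) ∧
    (∀ p a : ℕ, p.Prime → 1 ≤ a →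
      orbE (fun _ : Fin r => p ^ a) =
        ((p : ℚ) - 1) * (p : ℚ) ^ ((r - 1) * (a - 1)) * hpoly r (p : ℚ)) := by
  refine ⟨?_, ?_, ?_⟩
  · rw [orbE_const hr 1]
    norm_num [vonSterneck]
  · intro n₁ n₂ h1 h2 h
    haveI : NeZero n₁ := ⟨h1.ne'⟩
    haveI : NeZero n₂ := ⟨h2.ne'⟩
    haveI : NeZero (n₁ * n₂) := ⟨Nat.mul_ne_zero h1.ne' h2.ne'⟩
    have pF : ∀ k, (vonSterneck (k % n₁) n₁) ^ r = (vonSterneck k n₁) ^ r :=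
      fun k => by rw [vs_mod]
    have pG : ∀ k, (vonSterneck (k % n₂) n₂) ^ r = (vonSterneck k n₂) ^ r :=
      fun k => by rw [vs_mod]
    have key : ∑ k ∈ Finset.Icc 1 (n₁ * n₂), (vonSterneck k n₁) ^ r * (vonSterneck k n₂) ^ r
        = (∑ k ∈ Finset.Icc 1 n₁, (vonSterneck k n₁) ^ r)
          * (∑ k ∈ Finset.Icc 1 n₂, (vonSterneck k n₂) ^ r) := by
      rw [sum_Icc_one (n₁ * n₂) _ (fun k => by
            have e1 : vonSterneck (k % (n₁ * n₂)) n₁ = vonSterneck k n₁ := by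
              rw [← vs_mod (k % (n₁ * n₂)) n₁, Nat.mod_mod_of_dvd k (dvd_mul_right n₁ n₂), vs_mod]
            have e2 : vonSterneck (k % (n₁ * n₂)) n₂ = vonSterneck k n₂ := by
              rw [← vs_mod (k % (n₁ * n₂)) n₂, Nat.mod_mod_of_dvd k (dvd_mul_left n₂ n₁), vs_mod]
            rw [e1, e2]),
        sum_Icc_one n₁ _ pF, sum_Icc_one n₂ _ pG]
      exact sum_zmod_mul h (fun k => vonSterneck k n₁ ^ r) (fun k => vonSterneck k n₂ ^ r) pF pG
    rw [orbE_const hr, orbE_const hr, orbE_const hr,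
      show ∑ k ∈ Finset.Icc 1 (n₁ * n₂), vonSterneck k (n₁ * n₂) ^ r
        = ∑ k ∈ Finset.Icc 1 (n₁ * n₂), (vonSterneck k n₁) ^ r * (vonSterneck k n₂) ^ r from
        Finset.sum_congr rfl fun k _ => by rw [vs_mul k h1 h2 h, mul_pow],
      key]
    push_cast
    rw [div_mul_div_comm]
  · intro p a hp ha
    rw [orbE_const hr, sum_prime_pow r hr hp ha]
    have hp0 : (p : ℚ) ≠ 0 := Nat.cast_ne_zero.mpr hp.pos.ne'
    unfold hpoly
    obtain ⟨R, rfl⟩ : ∃ R, r = R + 1 := ⟨r - 1, by omega⟩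
    obtain ⟨A, rfl⟩ : ∃ A, a = A + 1 := ⟨a - 1, by omega⟩
    simp only [Nat.add_sub_cancel]
    push_cast
    rw [show (p : ℚ) ^ ((R) * (A)) = ((p : ℚ) ^ A) ^ R by rw [← pow_mul, mul_comm],
      show (p : ℚ) ^ (A + 1) = (p : ℚ) ^ A * p from pow_succ _ _,
      neg_pow, mul_pow, pow_succ ((p : ℚ) ^ A) R, pow_succ ((p : ℚ) - 1) R,
      pow_succ (-1 : ℚ) R]
    have hX : ((p : ℚ) ^ A) ≠ 0 := pow_ne_zero _ hp0
    field_simp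
    ring
end

section
/- Let M be a positive integer and m_1, m_2, …, m_r divisors of M (r ≥ 0); set d_j = M/m_j for j = 1,…,r. Then the number of tuples (x_1,…,x_r) of integers with 1 ≤ x_j ≤ M, gcd(x_j, M) = d_j for each j, and x_1 + x_2 + ⋯ + x_r ≡ 0 (mod M), is equal to E(m_1, m_2, …, m_r); in particular this number does not depend on the choice of the common multiple M. -/
section Aux
open ArithmeticFunction Finset
open scoped ArithmeticFunction.Moebius

/-- gcd is "multiplicative" in the second argument. -/
lemma gcd_mul_coprime (k : ℕ) {a b : ℕ} (hab : Nat.Coprime a b) :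
    Nat.gcd k (a * b) = Nat.gcd k a * Nat.gcd k b := by
  apply Nat.dvd_antisymm
  · have h1 : Nat.gcd k (a*b) = GCDMonoid.gcd k (a*b) := rfl
    have := gcd_mul_dvd_mul_gcd k a b
    exact this
  · have hco : (Nat.gcd k a).Coprime (Nat.gcd k b) :=
      Nat.Coprime.coprime_dvd_left (Nat.gcd_dvd_right k a)
        (Nat.Coprime.coprime_dvd_right (Nat.gcd_dvd_right k b) hab)
    refine Nat.Coprime.mul_dvd_of_dvd_of_dvd hco ?_ ?_
    · exact Nat.dvd_gcd (Nat.gcd_dvd_left _ _)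
        ((Nat.gcd_dvd_right k a).trans (Dvd.intro b rfl))
    · exact Nat.dvd_gcd (Nat.gcd_dvd_left _ _)
        ((Nat.gcd_dvd_right k b).trans (Dvd.intro_left a rfl))

noncomputable def dvdInd (k : ℕ) : ArithmeticFunction ℚ :=
  ⟨fun n => if n ∣ k ∧ 0 < n then (n : ℚ) else 0, by simp⟩

lemma dvdInd_apply (k n : ℕ) : dvdInd k n = if n ∣ k ∧ 0 < n then (n : ℚ) else 0 := rfl

lemma dvdInd_isMultiplicative (k : ℕ) : (dvdInd k).IsMultiplicative := by
  constructor
  · simp [dvdInd_apply]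
  · intro a b hab
    rcases Nat.eq_zero_or_pos a with rfl | ha
    · simp [dvdInd_apply]
    rcases Nat.eq_zero_or_pos b with rfl | hb
    · simp [dvdInd_apply]
    simp only [dvdInd_apply, ha, hb, and_true, Nat.mul_pos ha hb]
    by_cases h : a * b ∣ k
    · rw [if_pos h, if_pos (dvd_trans (Dvd.intro b rfl) h),
        if_pos (dvd_trans (Dvd.intro_left a rfl) h)]
      push_cast; ring
    · rw [if_neg h]
      by_cases h1 : a ∣ k
      · rw [if_pos h1, if_neg (fun h2 => h (hab.mul_dvd_of_dvd_of_dvd h1 h2))]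
        ring
      · rw [if_neg h1]; ring

noncomputable def ramB (k : ℕ) : ArithmeticFunction ℚ :=
  ⟨fun n => vonSterneck k n, by simp [vonSterneck]⟩

lemma ramB_apply (k n : ℕ) : ramB k n = vonSterneck k n := rfl

lemma ramB_isMultiplicative (k : ℕ) : (ramB k).IsMultiplicative := by
  constructor
  · simp [ramB_apply, vonSterneck]
  · intro a b hab
    rcases Nat.eq_zero_or_pos a with rfl | ha
    · simp [ramB_apply, vonSterneck]
    rcases Nat.eq_zero_or_pos b with rfl | hb
    · simp [ramB_apply, vonSterneck]
    simp only [ramB_apply, vonSterneck]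
    have hga : Nat.gcd k a ∣ a := Nat.gcd_dvd_right k a
    have hgb : Nat.gcd k b ∣ b := Nat.gcd_dvd_right k b
    have hg : Nat.gcd k (a * b) = Nat.gcd k a * Nat.gcd k b := gcd_mul_coprime k hab
    have hdiv : a * b / Nat.gcd k (a * b) = (a / Nat.gcd k a) * (b / Nat.gcd k b) := by
      rw [hg, Nat.div_mul_div_comm hga hgb]
    have hco : (a / Nat.gcd k a).Coprime (b / Nat.gcd k b) :=
      Nat.Coprime.coprime_dvd_left (Nat.div_dvd_of_dvd hga)
        (Nat.Coprime.coprime_dvd_right (Nat.div_dvd_of_dvd hgb) hab)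
    rw [hdiv, isMultiplicative_moebius.map_mul_of_coprime hco,
      Nat.totient_mul hab, Nat.totient_mul hco]
    push_cast
    rw [div_mul_div_comm]
    ring_nf

lemma gcd_pow_eq {p : ℕ} (hp : p.Prime) {k : ℕ} (hk : k ≠ 0) (i : ℕ) :
    Nat.gcd k (p ^ i) = p ^ (min (k.factorization p) i) := by
  obtain ⟨j, hj, hgj⟩ := (Nat.dvd_prime_pow hp).mp (Nat.gcd_dvd_right k (p ^ i))
  have hfac := Nat.factorization_gcd hk (pow_ne_zero i hp.ne_zero)
  have : (Nat.gcd k (p ^ i)).factorization p = min (k.factorization p) i := by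
    rw [hfac]; simp [hp.factorization_pow]
  rw [hgj] at this ⊢
  rw [Nat.Prime.factorization_pow hp] at this
  simp at this
  rw [this]

lemma holder_eq (k : ℕ) (hk : k ≠ 0) : dvdInd k * ((μ : ArithmeticFunction ℤ) : ArithmeticFunction ℚ) = ramB k := by
  rw [ArithmeticFunction.IsMultiplicative.eq_iff_eq_on_prime_powers _
    ((dvdInd_isMultiplicative k).mul isMultiplicative_moebius.intCast) _ (ramB_isMultiplicative k)]
  intro p i hp
  have hp1 : 1 < p := hp.one_lt
  have hppos : (0:ℕ) < p := hp.pos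
  set c := k.factorization p with hc
  have hdvd : ∀ j, p ^ j ∣ k ↔ j ≤ c := fun j =>
    (Nat.Prime.pow_dvd_iff_le_factorization hp hk)
  -- LHS as a sum over range (i+1)
  rw [ArithmeticFunction.mul_apply, Nat.sum_divisorsAntidiagonal (f := fun x y => dvdInd k x * ((μ:ArithmeticFunction ℤ):ArithmeticFunction ℚ) y), Nat.sum_divisors_prime_pow hp]
  have hterm : ∀ j ∈ Finset.range (i+1),
      dvdInd k (p^j) * ((μ:ArithmeticFunction ℤ):ArithmeticFunction ℚ) (p^i / p^j)
        = (if j ≤ c then (p:ℚ)^j else 0) * ((μ (p^(i-j)) : ℤ) : ℚ) := by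
    intro j hj
    rw [Finset.mem_range, Nat.lt_succ_iff] at hj
    rw [dvdInd_apply, Nat.pow_div hj hppos, intCoe_apply]
    simp [hdvd j, pow_pos hppos j]
  rw [Finset.sum_congr rfl hterm]
  -- RHS
  rw [ramB_apply]
  unfold vonSterneck
  rw [gcd_pow_eq hp hk i, Nat.pow_div (min_le_right _ _) hppos]
  rcases Nat.eq_zero_or_pos i with rfl | hi
  · simp
  -- i ≥ 1 : reduce sum to two terms
  have hne : i - 1 ≠ i := by omega
  have hsub : ({i-1, i} : Finset ℕ) ⊆ Finset.range (i+1) := by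
    intro x hx; simp at hx; rcases hx with rfl | rfl <;> simp <;> omega
  rw [← Finset.sum_subset hsub ?vanish]
  case vanish =>
    intro j hjr hjn
    simp only [Finset.mem_insert, Finset.mem_singleton, not_or] at hjn
    rw [Finset.mem_range, Nat.lt_succ_iff] at hjr
    have h2 : 2 ≤ i - j := by omega
    rw [moebius_apply_prime_pow hp (show i - j ≠ 0 by omega), if_neg (show i - j ≠ 1 by omega)]
    simp
  rw [Finset.sum_pair hne]
  have hii : i - (i-1) = 1 := by omega
  rw [hii, Nat.sub_self, pow_one, pow_zero, moebius_apply_prime hp, moebius_apply_one]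
  have htot : (Nat.totient (p^i) : ℚ) = (p:ℚ)^(i-1) * ((p:ℚ) - 1) := by
    obtain ⟨i', rfl⟩ : ∃ i', i = i' + 1 := ⟨i - 1, by omega⟩
    rw [Nat.totient_prime_pow_succ hp]
    push_cast [Nat.cast_sub hp.one_lt.le]
    simp
  rcases le_or_gt i c with hci | hci
  · -- c ≥ i
    rw [if_pos hci, if_pos (by omega), min_eq_right (by omega : i ≤ c)]
    simp only [Nat.sub_self, pow_zero, moebius_apply_one, Nat.totient_one]
    have hpow : (p:ℚ)^i = (p:ℚ) * (p:ℚ)^(i-1) := by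
      rw [← pow_succ']; congr 1; omega
    push_cast
    rw [htot, hpow]
    ring
  · rcases eq_or_lt_of_le (show c ≤ i - 1 by omega) with hceq | hclt
    · -- c = i - 1
      have hmin : min c i = c := min_eq_left (by omega)
      rw [if_pos (by omega), if_neg (by omega), hmin, show i - c = 1 by omega, pow_one,
        moebius_apply_prime hp, Nat.totient_prime hp, htot]
      have hne1 : ((p:ℚ) - 1) ≠ 0 := by
        have : (1:ℚ) < (p:ℚ) := by exact_mod_cast hp1
        linarith
      push_cast [Nat.cast_sub hp.one_lt.le]
      field_simp
      ring
    · -- c < i - 1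
      have hmin : min c i = c := min_eq_left (by omega)
      rw [if_neg (by omega), if_neg (by omega), hmin,
        moebius_apply_prime_pow hp (by omega), if_neg (by omega)]
      simp

lemma vonSterneck_eq_sum (k : ℕ) (hk : k ≠ 0) (n : ℕ) :
    vonSterneck k n = ∑ d ∈ n.divisors, (if d ∣ k then (d:ℚ) else 0) * ((μ (n/d) : ℤ) : ℚ) := by
  have h0 : (dvdInd k * ((μ : ArithmeticFunction ℤ) : ArithmeticFunction ℚ)) n = ramB k n := by
    rw [holder_eq k hk]
  rw [← ramB_apply, ← h0]
  rw [ArithmeticFunction.mul_apply, Nat.sum_divisorsAntidiagonal (f := fun x y => dvdInd k x * ((μ:ArithmeticFunction ℤ):ArithmeticFunction ℚ) y)]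
  refine Finset.sum_congr rfl fun d hd => ?_
  rw [Nat.mem_divisors] at hd
  have hd0 : 0 < d := Nat.pos_of_dvd_of_pos hd.1 (Nat.pos_of_ne_zero hd.2)
  rw [dvdInd_apply, intCoe_apply]
  simp [hd0]

/-- Geometric sum over `Icc 1 m` of an `m`-th root of unity. -/
lemma geom_Icc_sum {m : ℕ} (hm : m ≠ 0) {w : ℂ} (hw : w ^ m = 1) :
    ∑ t ∈ Finset.Icc 1 m, w ^ t = if w = 1 then (m : ℂ) else 0 := by
  by_cases h1 : w = 1
  · simp [h1, Nat.card_Icc]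
  · rw [if_neg h1]
    have : Finset.Icc 1 m = Finset.Ico 1 (m+1) := by rw [Finset.Ico_add_one_right_eq_Icc]
    rw [this, Finset.sum_Ico_eq_sum_range]
    simp only [Nat.add_sub_cancel]
    have : ∀ i, w ^ (1 + i) = w * w ^ i := fun i => by rw [pow_add, pow_one]
    rw [Finset.sum_congr rfl fun i _ => this i, ← Finset.mul_sum]
    rw [geom_sum_eq h1, hw]
    simp

lemma moebius_divisor_sum {m : ℕ} (hm : m ≠ 0) :
    ∑ d ∈ m.divisors, ((μ d : ℤ) : ℂ) = if m = 1 then 1 else 0 := by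
  have h : (μ * ((ArithmeticFunction.zeta : ArithmeticFunction ℕ) : ArithmeticFunction ℤ)) m
      = (1 : ArithmeticFunction ℤ) m := by rw [moebius_mul_coe_zeta]
  rw [coe_mul_zeta_apply] at h
  have h2 : ((∑ d ∈ m.divisors, μ d : ℤ) : ℂ) = (((1 : ArithmeticFunction ℤ) m : ℤ) : ℂ) := by
    rw [h]
  rw [one_apply] at h2
  push_cast at h2
  rw [h2]

/-- Ramanujan sum equals the von Sterneck function. -/
lemma ramanujan_eq_vonSterneck {n : ℕ} (hn : n ≠ 0) {z : ℂ} (hz : IsPrimitiveRoot z n)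
    {k : ℕ} (hk : k ≠ 0) :
    ∑ y ∈ (Finset.Icc 1 n).filter (fun y => Nat.gcd y n = 1), z ^ (k * y)
      = ((vonSterneck k n : ℚ) : ℂ) := by
  have hzn : z ^ n = 1 := hz.pow_eq_one
  -- replace filter by moebius sum
  have step1 : ∑ y ∈ (Finset.Icc 1 n).filter (fun y => Nat.gcd y n = 1), z ^ (k * y)
      = ∑ y ∈ Finset.Icc 1 n, ∑ d ∈ (Nat.gcd y n).divisors, ((μ d : ℤ) : ℂ) * z ^ (k * y) := by
    rw [Finset.sum_filter]
    refine Finset.sum_congr rfl fun y hy => ?_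
    rw [← Finset.sum_mul, moebius_divisor_sum (Nat.gcd_ne_zero_right hn)]
    split_ifs <;> simp
  rw [step1]
  -- swap the sums
  have step2 : ∑ y ∈ Finset.Icc 1 n, ∑ d ∈ (Nat.gcd y n).divisors, ((μ d : ℤ) : ℂ) * z ^ (k * y)
      = ∑ d ∈ n.divisors, ∑ y ∈ (Finset.Icc 1 n).filter (fun y => d ∣ y), ((μ d : ℤ) : ℂ) * z ^ (k * y) := by
    rw [Finset.sum_comm' (s' := fun d => (Finset.Icc 1 n).filter (fun y => d ∣ y)) (t' := n.divisors)]
    intro y d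
    simp only [Nat.mem_divisors, Finset.mem_filter, Finset.mem_Icc]
    constructor
    · rintro ⟨⟨h1, h2⟩, h3, h4⟩
      exact ⟨⟨⟨h1, h2⟩, (Nat.dvd_gcd_iff.mp h3).1⟩, (Nat.dvd_gcd_iff.mp h3).2, hn⟩
    · rintro ⟨⟨⟨h1, h2⟩, h3⟩, h4, h5⟩
      exact ⟨⟨h1, h2⟩, Nat.dvd_gcd h3 h4, Nat.gcd_ne_zero_right hn⟩
  rw [step2]
  -- evaluate the inner sums
  have step3 : ∀ d ∈ n.divisors,
      ∑ y ∈ (Finset.Icc 1 n).filter (fun y => d ∣ y), ((μ d : ℤ) : ℂ) * z ^ (k * y)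
        = ((μ d : ℤ) : ℂ) * (if (n / d) ∣ k then ((n / d : ℕ) : ℂ) else 0) := by
    intro d hd
    rw [Nat.mem_divisors] at hd
    have hd0 : 0 < d := Nat.pos_of_dvd_of_pos hd.1 (Nat.pos_of_ne_zero hd.2)
    have hnd0 : n / d ≠ 0 := Nat.div_ne_zero_iff.mpr ⟨hd0.ne', Nat.le_of_dvd (Nat.pos_of_ne_zero hn) hd.1⟩
    rw [← Finset.mul_sum]
    congr 1
    -- reindex y = t * d
    have hbij : ∑ y ∈ (Finset.Icc 1 n).filter (fun y => d ∣ y), z ^ (k * y)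
        = ∑ t ∈ Finset.Icc 1 (n / d), (z ^ (k * d)) ^ t := by
      refine Finset.sum_nbij' (fun y => y / d) (fun t => t * d) ?_ ?_ ?_ ?_ ?_
      · intro y hy
        simp only [Finset.mem_filter, Finset.mem_Icc] at hy
        simp only [Finset.mem_Icc]
        obtain ⟨⟨h1, h2⟩, h3⟩ := hy
        constructor
        · exact Nat.one_le_div_iff hd0 |>.mpr (Nat.le_of_dvd (by omega) h3)
        · exact Nat.div_le_div_right h2
      · intro t ht
        simp only [Finset.mem_Icc] at ht
        simp only [Finset.mem_filter, Finset.mem_Icc]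
        refine ⟨⟨by nlinarith [ht.1, hd0], ?_⟩, dvd_mul_left d t⟩
        calc t * d ≤ (n / d) * d := Nat.mul_le_mul_right d ht.2
        _ = n := Nat.div_mul_cancel hd.1
      · intro y hy
        simp only [Finset.mem_filter] at hy
        exact Nat.div_mul_cancel hy.2
      · intro t ht
        exact Nat.mul_div_cancel t hd0
      · intro y hy
        simp only [Finset.mem_filter] at hy
        rw [← pow_mul, mul_assoc, Nat.mul_div_cancel' hy.2]
    rw [hbij, geom_Icc_sum hnd0 (by rw [← pow_mul, show k * d * (n/d) = n * k by
        rw [mul_assoc, Nat.mul_div_cancel' hd.1, mul_comm], pow_mul, hzn, one_pow])]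
    have hiff : z ^ (k * d) = 1 ↔ (n / d) ∣ k := by
      rw [hz.pow_eq_one_iff_dvd]
      constructor
      · intro h
        have h2 : (n/d) * d ∣ k * d := by rw [Nat.div_mul_cancel hd.1]; exact h
        exact (Nat.mul_dvd_mul_iff_right hd0).mp h2
      · intro h
        calc n = (n/d) * d := (Nat.div_mul_cancel hd.1).symm
        _ ∣ k * d := Nat.mul_dvd_mul_right h d
    split_ifs with h1 h2 h2
    · rfl
    · exact absurd (hiff.mp h1) h2
    · exact absurd (hiff.mpr h2) h1
    · rfl
  rw [Finset.sum_congr rfl step3]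
  -- reindex d ↦ n / d and compare with vonSterneck_eq_sum
  have step4 : ∑ d ∈ n.divisors, ((μ d : ℤ) : ℂ) * (if (n / d) ∣ k then ((n / d : ℕ) : ℂ) else 0)
      = ∑ d ∈ n.divisors, ((μ (n / d) : ℤ) : ℂ) * (if d ∣ k then ((d : ℕ) : ℂ) else 0) := by
    rw [← Nat.sum_div_divisors n (fun d => ((μ (n / d) : ℤ) : ℂ) * (if d ∣ k then ((d : ℕ) : ℂ) else 0))]
    refine Finset.sum_congr rfl fun d hd => ?_
    rw [Nat.mem_divisors] at hd
    rw [Nat.div_div_self hd.1 hd.2]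
  rw [step4, vonSterneck_eq_sum k hk n]
  push_cast
  refine Finset.sum_congr rfl fun d hd => ?_
  split_ifs <;> push_cast <;> ring

lemma periodic_shift {L : ℕ} (f : ℕ → ℚ) (hf : ∀ k, f (k + L) = f k) :
    ∀ q i, f (q * L + i) = f i := by
  intro q
  induction q with
  | zero => simp
  | succ q ih =>
    intro i
    rw [show (q+1)*L + i = (q*L + i) + L by ring, hf, ih]

lemma periodic_sum_range {L : ℕ} (f : ℕ → ℚ) (hf : ∀ k, f (k + L) = f k) (q : ℕ) :
    ∑ k ∈ Finset.range (q * L), f k = q * ∑ k ∈ Finset.range L, f k := by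
  induction q with
  | zero => simp
  | succ q ih =>
    rw [show (q+1)*L = q*L + L by ring, Finset.sum_range_add, ih]
    rw [Finset.sum_congr rfl fun i _ => periodic_shift f hf q i]
    push_cast; ring

lemma periodic_sum_Icc {L : ℕ} (f : ℕ → ℚ) (hf : ∀ k, f (k + L) = f k) (q : ℕ) :
    ∑ k ∈ Finset.Icc 1 (q * L), f k = q * ∑ k ∈ Finset.Icc 1 L, f k := by
  have h : ∀ N, ∑ k ∈ Finset.Icc 1 N, f k = ∑ i ∈ Finset.range N, f (1 + i) := by
    intro N
    rw [← Finset.Ico_add_one_right_eq_Icc, Finset.sum_Ico_eq_sum_range]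
    simp
  rw [h, h, periodic_sum_range (fun i => f (1+i))
    (fun k => by show f (1 + (k + L)) = f (1 + k); rw [show 1 + (k + L) = (1+k) + L by ring, hf]) q]

lemma vonSterneck_period {n L : ℕ} (hnL : n ∣ L) (k : ℕ) :
    vonSterneck (k + L) n = vonSterneck k n := by
  have h : Nat.gcd (k + L) n = Nat.gcd k n := by
    obtain ⟨c, rfl⟩ := hnL
    rw [show k + n * c = c * n + k by ring, Nat.gcd_mul_right_add_left]
  simp [vonSterneck, h]

lemma inner_sum_eq (M : ℕ) (hM : 0 < M) (mj : ℕ) (hmj : mj ∣ M) (hmj0 : 0 < mj)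
    {z : ℂ} (hz : IsPrimitiveRoot z M) {k : ℕ} (hk : k ≠ 0) :
    ∑ v ∈ (Finset.Icc 1 M).filter (fun v => Nat.gcd v M = M / mj), z ^ (k * v)
      = ((vonSterneck k mj : ℚ) : ℂ) := by
  set d := M / mj with hd
  have hdm : d * mj = M := Nat.div_mul_cancel hmj
  have hd0 : 0 < d := Nat.div_pos (Nat.le_of_dvd hM hmj) hmj0
  have hMd : M / d = mj := by rw [← hdm, Nat.mul_div_cancel_left _ hd0]
  have hzd : IsPrimitiveRoot (z ^ d) mj := hz.pow hM hdm.symm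
  rw [← ramanujan_eq_vonSterneck hmj0.ne' hzd hk]
  refine Finset.sum_nbij' (fun v => v / d) (fun y => d * y) ?_ ?_ ?_ ?_ ?_
  · intro v hv
    simp only [Finset.mem_filter, Finset.mem_Icc] at hv ⊢
    obtain ⟨⟨h1, h2⟩, h3⟩ := hv
    have hdv : d ∣ v := h3 ▸ Nat.gcd_dvd_left v M
    refine ⟨⟨(Nat.one_le_div_iff hd0).mpr (Nat.le_of_dvd (by omega) hdv), ?_⟩, ?_⟩
    · calc v / d ≤ M / d := Nat.div_le_div_right h2
      _ = mj := hMd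
    · obtain ⟨t, rfl⟩ := hdv
      rw [Nat.mul_div_cancel_left t hd0]
      rw [← hdm, Nat.gcd_mul_left] at h3
      exact Nat.eq_of_mul_eq_mul_left hd0 (h3.trans (mul_one d).symm)
  · intro y hy
    simp only [Finset.mem_filter, Finset.mem_Icc] at hy ⊢
    obtain ⟨⟨h1, h2⟩, h3⟩ := hy
    refine ⟨⟨Nat.one_le_iff_ne_zero.mpr (Nat.mul_ne_zero hd0.ne' (by omega)), ?_⟩, ?_⟩
    · calc d * y ≤ d * mj := Nat.mul_le_mul_left d h2
      _ = M := hdm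
    · rw [← hdm, Nat.gcd_mul_left, h3, mul_one]
  · intro v hv
    simp only [Finset.mem_filter] at hv
    exact Nat.mul_div_cancel' (hv.2 ▸ Nat.gcd_dvd_left v M)
  · intro y hy
    exact Nat.mul_div_cancel_left y hd0
  · intro v hv
    simp only [Finset.mem_filter] at hv
    have hdv : d ∣ v := hv.2 ▸ Nat.gcd_dvd_left v M
    rw [← pow_mul, show d * (k * (v / d)) = k * (d * (v/d)) by ring, Nat.mul_div_cancel' hdv]


end Aux

open ArithmeticFunction Finset in
theorem card_congruence_solutions_eq_orbE (M : ℕ) (hM : 0 < M) {r : ℕ}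
    (m : Fin r → ℕ) (hm : ∀ j, m j ∣ M) (hm0 : ∀ j, 0 < m j) :
    (((Fintype.piFinset fun _ : Fin r => Finset.Icc 1 M).filter fun x =>
        (∀ j, Nat.gcd (x j) M = M / m j) ∧ (∑ j, x j) % M = 0).card : ℚ) = orbE m := by
  set L := Finset.univ.lcm m with hL
  have hLM : L ∣ M := Finset.lcm_dvd fun j _ => hm j
  have hL0 : L ≠ 0 := by
    intro h
    rw [h] at hLM
    exact hM.ne' (zero_dvd_iff.mp hLM)
  have hmL : ∀ j, m j ∣ L := fun j => Finset.dvd_lcm (Finset.mem_univ j)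
  obtain ⟨q, hq⟩ := hLM
  have hq0 : q ≠ 0 := by
    intro h; rw [h, mul_zero] at hq; exact hM.ne' hq
  set z : ℂ := Complex.exp (2 * Real.pi * Complex.I / M) with hzdef
  have hz : IsPrimitiveRoot z M := Complex.isPrimitiveRoot_exp M hM.ne'
  have hzM : z ^ M = 1 := hz.pow_eq_one
  set A : Fin r → Finset ℕ :=
    fun j => (Finset.Icc 1 M).filter fun v => Nat.gcd v M = M / m j with hA
  have hT : ((Fintype.piFinset fun _ : Fin r => Finset.Icc 1 M).filter fun x =>
        (∀ j, Nat.gcd (x j) M = M / m j) ∧ (∑ j, x j) % M = 0)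
      = (Fintype.piFinset A).filter fun x => (∑ j, x j) % M = 0 := by
    ext x
    simp only [Finset.mem_filter, Fintype.mem_piFinset, hA]
    constructor
    · rintro ⟨h1, h2, h3⟩
      exact ⟨fun j => ⟨h1 j, h2 j⟩, h3⟩
    · rintro ⟨h1, h2⟩
      exact ⟨fun j => (h1 j).1, fun j => (h1 j).2, h2⟩
  have key : ((((Fintype.piFinset fun _ : Fin r => Finset.Icc 1 M).filter fun x =>
        (∀ j, Nat.gcd (x j) M = M / m j) ∧ (∑ j, x j) % M = 0).card : ℚ) : ℂ) * M
      = ∑ k ∈ Finset.Icc 1 M, ∏ j, ((vonSterneck k (m j) : ℚ) : ℂ) := by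
    rw [hT]
    have hx_eval : ∀ x : Fin r → ℕ, ∑ k ∈ Finset.Icc 1 M, z ^ (k * ∑ j, x j)
        = if (∑ j, x j) % M = 0 then (M:ℂ) else 0 := by
      intro x
      have h2 : ∑ k ∈ Finset.Icc 1 M, z ^ (k * ∑ j, x j)
          = ∑ k ∈ Finset.Icc 1 M, (z ^ (∑ j, x j)) ^ k := by
        refine Finset.sum_congr rfl fun k _ => ?_
        rw [← pow_mul, mul_comm]
      rw [h2, geom_Icc_sum hM.ne' (by rw [← pow_mul, mul_comm, pow_mul, hzM, one_pow])]
      have hiff : z ^ (∑ j, x j) = 1 ↔ (∑ j, x j) % M = 0 := by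
        rw [hz.pow_eq_one_iff_dvd, Nat.dvd_iff_mod_eq_zero]
      split_ifs with ha hb hb
      · rfl
      · exact absurd (hiff.mp ha) hb
      · exact absurd (hiff.mpr hb) ha
      · rfl
    have hcardM : ((((Fintype.piFinset A).filter fun x => (∑ j, x j) % M = 0).card : ℂ)) * M
        = ∑ x ∈ Fintype.piFinset A, ∑ k ∈ Finset.Icc 1 M, z ^ (k * ∑ j, x j) := by
      rw [← Finset.sum_subset (Finset.filter_subset
        (fun x => (∑ j, x j) % M = 0) (Fintype.piFinset A)) ?van]
      case van =>
        intro x hx hnx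
        rw [hx_eval x, if_neg]
        intro h
        exact hnx (Finset.mem_filter.mpr ⟨hx, h⟩)
      rw [Finset.sum_congr rfl (fun x hx =>
        (hx_eval x).trans (if_pos (Finset.mem_filter.mp hx).2)),
        Finset.sum_const, nsmul_eq_mul]
    have hcast : ((((((Fintype.piFinset A).filter fun x =>
        (∑ j, x j) % M = 0).card : ℕ) : ℚ)) : ℂ) * M
        = ((((Fintype.piFinset A).filter fun x => (∑ j, x j) % M = 0).card : ℂ)) * M := by
      push_cast; ring
    rw [hcast, hcardM, Finset.sum_comm]
    refine Finset.sum_congr rfl fun k hk => ?_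
    rw [Finset.mem_Icc] at hk
    have hk0 : k ≠ 0 := by omega
    have step2 : ∀ x ∈ Fintype.piFinset A, z ^ (k * ∑ j, x j) = ∏ j, z ^ (k * x j) := by
      intro x _
      rw [Finset.prod_pow_eq_pow_sum, ← Finset.mul_sum]
    rw [Finset.sum_congr rfl step2]
    refine ((Finset.prod_univ_sum A (fun j v => z ^ (k * v))).symm).trans ?_
    refine Finset.prod_congr rfl fun j _ => ?_
    exact inner_sum_eq M hM (m j) (hm j) (hm0 j) hz hk0
  have keyQ : (((Fintype.piFinset fun _ : Fin r => Finset.Icc 1 M).filter fun x =>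
        (∀ j, Nat.gcd (x j) M = M / m j) ∧ (∑ j, x j) % M = 0).card : ℚ) * M
      = ∑ k ∈ Finset.Icc 1 M, ∏ j, vonSterneck k (m j) := by
    have := key
    push_cast at this
    exact_mod_cast this
  have hper : ∀ k, (∏ j, vonSterneck (k + L) (m j)) = ∏ j, vonSterneck k (m j) :=
    fun k => Finset.prod_congr rfl fun j _ => vonSterneck_period (hmL j) k
  have hsum : (∑ k ∈ Finset.Icc 1 M, ∏ j, vonSterneck k (m j))
      = q * ∑ k ∈ Finset.Icc 1 L, ∏ j, vonSterneck k (m j) := by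
    rw [hq, show L * q = q * L by ring]
    exact periodic_sum_Icc _ hper q
  rw [hsum] at keyQ
  rw [orbE, ← hL]
  have hLQ : ((L:ℚ)) ≠ 0 := Nat.cast_ne_zero.mpr hL0
  have hqQ : ((q:ℚ)) ≠ 0 := Nat.cast_ne_zero.mpr hq0
  rw [eq_div_iff hLQ]
  have hMcast : ((M:ℚ)) = (L:ℚ) * q := by rw [hq]; push_cast; ring
  rw [hMcast] at keyQ
  exact mul_right_cancel₀ hqQ (by linear_combination keyQ)
end
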